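/- For every integer k ≥ 1, the polynomial P_k contains only monomials of degree congruent to k−1 modulo 2 (i.e., the coefficient of X^m in P_k is zero whenever m − (k−1) is odd), and its coefficients alternate in sign: for every integer j ≥ 0, the coefficient of X^{k−1−2j} in P_k multiplied by (−1)^{k−1+j} is nonnegative. -/
import Mathlib


noncomputable section

open Polynomial

/-- The polynomials `P_k` defined by `P₁ = 1` and
`P_{k+1}(X) = (1-2k)·X·P_k(X) + (1+X²)·P_k'(X)` for `k ≥ 1`. -/
def P : ℕ → Polynomial ℝ
  | 0 => 0
  | 1 => 1
  | (k + 2) => C (1 - 2 * ((k : ℝ) + 1)) * X * P (k + 1)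
      + (1 + X ^ 2) * derivative (P (k + 1))

lemma P_succ_succ (k : ℕ) : P (k+2) = C (1 - 2 * ((k : ℝ) + 1)) * X * P (k + 1)
      + (1 + X ^ 2) * derivative (P (k + 1)) := rfl

lemma coeff_P_zero (k : ℕ) : (P (k+2)).coeff 0 = (P (k+1)).coeff 1 := by
  rw [P_succ_succ]
  simp [coeff_derivative, mul_comm (X^2), coeff_mul_X_pow']

lemma coeff_P_succ (k m : ℕ) :
    (P (k+2)).coeff (m+1) =
      (1 - 2*((k:ℝ)+1)) * (P (k+1)).coeff m
      + (P (k+1)).coeff (m+2) * (m+2)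
      + (P (k+1)).coeff m * m := by
  rw [P_succ_succ, coeff_add, mul_assoc, coeff_C_mul, coeff_X_mul, add_mul, one_mul,
    coeff_add, coeff_derivative]
  cases m with
  | zero =>
    rw [mul_comm (X^2)]
    simp [coeff_mul_X_pow']
    left; norm_num
  | succ d =>
    have h2 : (X^2 * derivative (P (k+1))).coeff (d+2) = (derivative (P (k+1))).coeff d := by
      simpa using coeff_X_pow_mul (derivative (P (k+1))) 2 d
    rw [show d+1+1 = d+2 from rfl, h2, coeff_derivative]
    push_cast; ring

lemma P_aux (k : ℕ) :
    (∀ m, k+1 ≤ m → (P (k+1)).coeff m = 0) ∧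
    (∀ m, m % 2 ≠ k % 2 → (P (k+1)).coeff m = 0) ∧
    ∀ j, 2*j ≤ k → 0 ≤ (-1:ℝ)^(k+j) * (P (k+1)).coeff (k - 2*j) := by
  induction k with
  | zero =>
    refine ⟨?_, ?_, ?_⟩
    · intro m hm
      have h : m ≠ 0 := by omega
      simp [P, coeff_one, h]
    · intro m hm
      have h : m ≠ 0 := by omega
      simp [P, coeff_one, h]
    · intro j hj
      have h : j = 0 := by omega
      subst h
      simp [P]
  | succ k ih =>
    obtain ⟨hdeg, hpar, hsgn⟩ := ih
    refine ⟨?_, ?_, ?_⟩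
    · intro m hm
      obtain ⟨n, rfl⟩ : ∃ n, m = n+1 := ⟨m-1, by omega⟩
      rw [coeff_P_succ, hdeg n (by omega), hdeg (n+2) (by omega)]
      ring
    · intro m hm
      cases m with
      | zero => rw [coeff_P_zero, hpar 1 (by omega)]
      | succ n =>
        rw [coeff_P_succ, hpar n (by omega), hpar (n+2) (by omega)]
        ring
    · intro j hj
      rcases Nat.lt_or_ge (2*j) (k+1) with hlt | hge
      · -- 2j ≤ k
        have hk2 : 2*j ≤ k := by omega
        rw [show k+1-2*j = (k-2*j)+1 by omega, coeff_P_succ,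
          Nat.cast_sub hk2]
        push_cast
        have h1 := hsgn j hk2
        set b := (P (k+1)).coeff (k-2*j) with hb
        have hcast : 2*(j:ℝ) ≤ (k:ℝ) := by exact_mod_cast hk2
        by_cases hj0 : j = 0
        · subst hj0
          have hb' : (P (k+1)).coeff (k - 2*0 + 2) = 0 := hdeg _ (by omega)
          rw [hb']
          simp only [Nat.add_zero, Nat.mul_zero, Nat.cast_zero] at h1 ⊢
          rcases Nat.even_or_odd k with he | ho
          · rw [he.neg_one_pow] at h1
            rw [show (-1:ℝ)^(k+1) = -1 from (he.add_one).neg_one_pow]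
            nlinarith [h1, Nat.cast_nonneg (α := ℝ) k]
          · rw [ho.neg_one_pow] at h1
            rw [show (-1:ℝ)^(k+1) = 1 from (ho.add_one).neg_one_pow]
            nlinarith [h1, Nat.cast_nonneg (α := ℝ) k]
        · have hj1 : 1 ≤ j := by omega
          have h2 := hsgn (j-1) (by omega)
          rw [show k - 2*(j-1) = k - 2*j + 2 by omega] at h2
          set b' := (P (k+1)).coeff (k-2*j+2) with hb'
          rcases Nat.even_or_odd (k+j) with he | ho
          · rw [he.neg_one_pow] at h1
            have e2 : (-1:ℝ)^(k+1+j) = -1 := by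
              apply Odd.neg_one_pow
              rw [Nat.odd_iff]
              have := Nat.even_iff.mp he
              omega
            have e3 : (-1:ℝ)^(k+(j-1)) = -1 := by
              apply Odd.neg_one_pow
              rw [Nat.odd_iff]
              have := Nat.even_iff.mp he
              omega
            rw [e3] at h2
            rw [e2]
            have t2 : b' * ((k:ℝ) - 2*j + 2) ≤ 0 :=
              mul_nonpos_of_nonpos_of_nonneg (by linarith) (by linarith)
            have t3 : 0 ≤ b * ((k:ℝ) + 2*j + 1) :=
              mul_nonneg (by linarith) (by positivity)
            nlinarith [t2, t3]
          · rw [ho.neg_one_pow] at h1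
            have e2 : (-1:ℝ)^(k+1+j) = 1 := by
              apply Even.neg_one_pow
              rw [Nat.even_iff]
              have := Nat.odd_iff.mp ho
              omega
            have e3 : (-1:ℝ)^(k+(j-1)) = 1 := by
              apply Even.neg_one_pow
              rw [Nat.even_iff]
              have := Nat.odd_iff.mp ho
              omega
            rw [e3] at h2
            rw [e2]
            have t2 : 0 ≤ b' * ((k:ℝ) - 2*j + 2) :=
              mul_nonneg (by linarith) (by linarith)
            have t3 : b * ((k:ℝ) + 2*j + 1) ≤ 0 :=
              mul_nonpos_of_nonpos_of_nonneg (by linarith) (by positivity)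
            nlinarith [t2, t3]
      · -- 2j = k+1
        have hk2 : 2*j = k+1 := by omega
        rw [show k+1-2*j = 0 by omega, coeff_P_zero]
        have hj1 : 1 ≤ j := by omega
        have h2 := hsgn (j-1) (by omega)
        rw [show k - 2*(j-1) = 1 by omega] at h2
        rw [show (-1:ℝ)^(k+1+j) = (-1)^(k+(j-1)) by
          rw [show k+1+j = k+(j-1)+2 by omega, pow_add]; norm_num]
        exact h2

/-- Lemma 2.1: the monomials of `P_k` all have degree congruent to `k-1` mod `2`,
and the coefficients alternate in sign:
`(-1)^{k-1+j}·(coefficient of X^{k-1-2j}) ≥ 0` for all `j` with `2j ≤ k-1`. -/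
theorem P_parity_and_alternating_signs (k : ℕ) (hk : 1 ≤ k) :
    (∀ m : ℕ, m % 2 ≠ (k - 1) % 2 → (P k).coeff m = 0) ∧
      (∀ j : ℕ, 2 * j ≤ k - 1 →
        0 ≤ (-1 : ℝ) ^ (k - 1 + j) * (P k).coeff (k - 1 - 2 * j)) := by
  obtain ⟨n, rfl⟩ : ∃ n, k = n+1 := ⟨k-1, by omega⟩
  obtain ⟨h1, h2, h3⟩ := P_aux n
  simp only [Nat.add_sub_cancel]
  exact ⟨h2, h3⟩
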